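/- For c₁ ∈ (3/4, 1) and N ≥ 1, if a point (x₁,…,x_N) ∈ [0,1]ᴺ has the property that each coordinate xᵢ has its full forward orbit under the threshold map f_{c₁} disjoint from C = {x : f(x) ≥ c₁}, then the orbit of (x₁,…,x_N) under the cascading map F_{c₁} evolves with zero excess at every site at every step, i.e., F_{c₁}ⁿ(x₁,…,x_N) = (f_{c₁}ⁿ(x₁),…,f_{c₁}ⁿ(x_N)) for all n. -/

import Mathlib

open Set Real

noncomputable def f (x : ℝ) : ℝ := 4 * x * (1 - x)

noncomputable def fc (c₁ x : ℝ) : ℝ := min (f x) c₁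

/-- Sequential cascading of a list of values with incoming excess `e`:
at each site the value plus the incoming excess is capped at `c₁` and the
surplus is passed on; returns the new list together with the final excess. -/
noncomputable def cascade (c₁ : ℝ) : List ℝ → ℝ → List ℝ × ℝ
  | [], e => ([], e)
  | y :: ys, e =>
      if y + e ≤ c₁ then
        let r := cascade c₁ ys 0
        ((y + e) :: r.1, r.2)
      else
        let r := cascade c₁ ys (y + e - c₁)
        (c₁ :: r.1, r.2)

/-- The cascading map: apply the logistic map at each site, then cascade. -/
noncomputable def Fmap (c₁ : ℝ) (xs : List ℝ) : List ℝ :=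
  (cascade c₁ (xs.map f) 0).1

lemma mem_Icc_of_le_f {c₁ x : ℝ} (hc : (0:ℝ) < c₁) (hx : c₁ ≤ f x) :
    x ∈ Set.Icc (0:ℝ) 1 := by
  unfold f at hx
  constructor <;> nlinarith

lemma cascade_trivial (c₁ : ℝ) (ys : List ℝ) (hy : ∀ y ∈ ys, y < c₁) :
    cascade c₁ ys 0 = (ys, 0) := by
  induction ys with
  | nil => rfl
  | cons y ys ih =>
      have h1 : y + 0 ≤ c₁ := by
        have := hy y List.mem_cons_self; linarith
      have ih' := ih (fun z hz => hy z (List.mem_cons_of_mem _ hz))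
      rw [cascade, if_pos h1, ih']
      simp

lemma Fmap_eq (c₁ : ℝ) (xs : List ℝ) (hx : ∀ x ∈ xs, f x < c₁) :
    Fmap c₁ xs = xs.map (fc c₁) := by
  have h1 : ∀ y ∈ xs.map f, y < c₁ := by
    intro y hy
    obtain ⟨x, hx', rfl⟩ := List.mem_map.1 hy
    exact hx x hx'
  rw [Fmap, cascade_trivial c₁ _ h1]
  apply List.map_congr_left
  intro x hx'
  exact (min_eq_left (le_of_lt (hx x hx'))).symm

theorem cascading_trivial_on_avoiding_orbits (c₁ : ℝ)
    (hc : c₁ ∈ Set.Ioo (3/4 : ℝ) 1) (N : ℕ) (hN : 1 ≤ N)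
    (xs : List ℝ) (hlen : xs.length = N)
    (h : ∀ x ∈ xs, ∀ n : ℕ,
      (fc c₁)^[n] x ∉ {y : ℝ | y ∈ Set.Icc (0:ℝ) 1 ∧ c₁ ≤ f y}) :
    ∀ n : ℕ, (Fmap c₁)^[n] xs = xs.map ((fc c₁)^[n]) := by
  have hc0 : (0:ℝ) < c₁ := by linarith [hc.1]
  have key : ∀ x, (∀ n : ℕ,
      (fc c₁)^[n] x ∉ {y : ℝ | y ∈ Set.Icc (0:ℝ) 1 ∧ c₁ ≤ f y}) →
      ∀ n : ℕ, f ((fc c₁)^[n] x) < c₁ := by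
    intro x hx n
    by_contra hle
    push_neg at hle
    exact hx n ⟨mem_Icc_of_le_f hc0 hle, hle⟩
  clear hN hlen
  intro n
  induction n generalizing xs with
  | zero => simp
  | succ n ih =>
      have h' : ∀ y ∈ xs.map (fc c₁), ∀ m : ℕ,
          (fc c₁)^[m] y ∉ {y : ℝ | y ∈ Set.Icc (0:ℝ) 1 ∧ c₁ ≤ f y} := by
        intro y hy m
        obtain ⟨x, hx', rfl⟩ := List.mem_map.1 hy
        rw [← Function.iterate_succ_apply]
        exact h x hx' (m + 1)
      rw [Function.iterate_succ_apply,
        Fmap_eq c₁ xs (fun x hx => key x (h x hx) 0),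
        ih (xs.map (fc c₁)) h', List.map_map]
      rfl
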